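/- Let n ≥ 3, ψ a permutation-symmetric state of n qudits, and X an invertible matrix such that φ := X_{(1)}ψ is in the symmetric subspace. Then there exists a matrix S with S^n = X, S_{(1)}ψ in the symmetric subspace, and S^{⊗n} ψ = φ. -/

import Mathlib

open Matrix BigOperators Polynomial

/-- Permutation symmetry of an `n`-qudit state represented by its amplitudes. -/
def PSym {n d : ℕ} (ψ : (Fin n → Fin d) → ℂ) : Prop :=
  ∀ σ : Equiv.Perm (Fin n), ∀ x : Fin n → Fin d, ψ (x ∘ σ) = ψ x

/-- The operator `B` acting on the `k`-th tensor factor (identity elsewhere). -/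
noncomputable def appAt {n d : ℕ} (k : Fin n) (B : Matrix (Fin d) (Fin d) ℂ)
    (ψ : (Fin n → Fin d) → ℂ) : (Fin n → Fin d) → ℂ :=
  fun x => ∑ j : Fin d, B (x k) j * ψ (Function.update x k j)

/-- The operator `A 1 ⊗ A 2 ⊗ ⋯ ⊗ A n` acting on an `n`-qudit state. -/
noncomputable def appAll {n d : ℕ} (A : Fin n → Matrix (Fin d) (Fin d) ℂ)
    (ψ : (Fin n → Fin d) → ℂ) : (Fin n → Fin d) → ℂ :=
  fun x => ∑ y : Fin n → Fin d, (∏ k, A k (x k) (y k)) * ψ y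



-- binomial expansion with remainder
lemma binom_aux {R : Type*} [CommRing R] (f e : R) (n : ℕ) :
    ∃ a, (f + e) ^ (n + 1) = f ^ (n + 1) + (n + 1 : ℕ) * f ^ n * e + e ^ 2 * a := by
  induction n with
  | zero => exact ⟨0, by ring⟩
  | succ n ih =>
    obtain ⟨a, ha⟩ := ih
    refine ⟨f * a + (n + 1 : ℕ) * f ^ n + e * a, ?_⟩
    have : (f + e) ^ (n + 2) = (f + e) * (f + e) ^ (n + 1) := by ring
    rw [this, ha]
    push_cast
    ring

lemma coprime_X_sub_C {a : ℂ} {q : ℂ[X]} (h : q.eval a ≠ 0) :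
    IsCoprime (X - C a) q := by
  have hq : q %ₘ (X - C a) + (X - C a) * (q /ₘ (X - C a)) = q :=
    Polynomial.modByMonic_add_div q (X - C a)
  rw [Polynomial.modByMonic_X_sub_C_eq_C_eval] at hq
  refine ⟨-(C (q.eval a)⁻¹) * (q /ₘ (X - C a)), C (q.eval a)⁻¹, ?_⟩
  have : C (q.eval a)⁻¹ * C (q.eval a) = 1 := by
    rw [← C_mul, inv_mul_cancel₀ h, C_1]
  linear_combination (-(C (q.eval a)⁻¹)) * hq + this

lemma exists_root_poly (p : ℂ[X]) (hp0 : p.eval 0 ≠ 0) (n : ℕ) (hn : 1 ≤ n) :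
    ∃ f : ℂ[X], p ∣ f ^ n - X := by
  have hp : p ≠ 0 := fun h => hp0 (by simp [h])
  choose μ hμn using fun l : ℂ => IsAlgClosed.exists_pow_nat_eq l hn
  set R : Finset ℂ := p.roots.toFinset with hR
  have hRne : ∀ l ∈ R, l ≠ 0 := by
    intro l hl h0
    subst h0
    exact hp0 ((Polynomial.mem_roots'.1 (Multiset.mem_toFinset.1 hl)).2)
  have hμne : ∀ l ∈ R, μ l ≠ 0 := by
    intro l hl h
    apply hRne l hl
    rw [← hμn l, h, zero_pow (by omega)]
  set r : ℂ[X] := ∏ l ∈ R, (X - C l) with hr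
  have hcop : (↑R : Set ℂ).Pairwise (Function.onFun IsCoprime fun l : ℂ => X - C l) := by
    intro a _ b _ hab
    exact isCoprime_X_sub_C_of_isUnit_sub (sub_ne_zero_of_ne hab).isUnit
  have hinj : Set.InjOn (id : ℂ → ℂ) ↑R := fun a _ b _ h => h
  have hev0 : ∀ l ∈ R, (Lagrange.interpolate R id μ).eval l = μ l := fun l hl =>
    Lagrange.eval_interpolate_at_node μ hinj hl
  have key : ∀ k : ℕ, 1 ≤ k → ∃ f : ℂ[X],
      (∀ l ∈ R, f.eval l = μ l) ∧ r ^ k ∣ f ^ n - X := by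
    intro k hk
    induction k, hk using Nat.le_induction with
    | base =>
      refine ⟨Lagrange.interpolate R id μ, hev0, ?_⟩
      rw [pow_one, hr]
      apply Finset.prod_dvd_of_coprime hcop
      intro l hl
      rw [Polynomial.dvd_iff_isRoot]
      simp only [Polynomial.IsRoot, Polynomial.eval_sub, Polynomial.eval_pow,
        Polynomial.eval_X, hev0 l hl, hμn l, sub_self]
    | succ k hk ih =>
      obtain ⟨f, hev, hdvd⟩ := ih
      set c : ℂ[X] := (n : ℂ[X]) * f ^ (n - 1) with hc
      have hcl : ∀ l ∈ R, IsCoprime (X - C l) c := by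
        intro l hl
        apply coprime_X_sub_C
        rw [hc]
        simp only [Polynomial.eval_mul, Polynomial.eval_pow, Polynomial.eval_natCast,
          hev l hl]
        exact mul_ne_zero (Nat.cast_ne_zero.2 (by omega)) (pow_ne_zero _ (hμne l hl))
      have hrc : IsCoprime c (r ^ (k + 1)) :=
        (IsCoprime.pow_left (IsCoprime.prod_left fun l hl => hcl l hl)).symm
      obtain ⟨g, h, hgh⟩ := hrc
      set e : ℂ[X] := -((f ^ n - X) * g) with he
      obtain ⟨a, ha⟩ := binom_aux f e (n - 1)
      have hn1 : n - 1 + 1 = n := by omega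
      rw [hn1] at ha
      refine ⟨f + e, ?_, ?_⟩
      · intro l hl
        have h0 : (f ^ n - X).eval l = 0 := by
          simp [hev l hl, hμn l]
        simp [he, h0, hev l hl]
      · have h1 : f ^ n - X + (n : ℂ[X]) * f ^ (n - 1) * e
            = (f ^ n - X) * (h * r ^ (k + 1)) := by
          rw [he, hc] at *
          linear_combination (-(f ^ n - X)) * hgh
        have hd2 : r ^ (k + 1) ∣ e ^ 2 * a := by
          have h2k : r ^ (k + 1) ∣ (f ^ n - X) ^ 2 := by
            calc r ^ (k + 1) ∣ r ^ (2 * k) := pow_dvd_pow r (by omega)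
              _ = (r ^ k) ^ 2 := by rw [← pow_mul, mul_comm]
              _ ∣ (f ^ n - X) ^ 2 := pow_dvd_pow_of_dvd hdvd 2
          have : e ^ 2 = (f ^ n - X) ^ 2 * g ^ 2 := by rw [he]; ring
          rw [this]
          exact Dvd.dvd.mul_right (Dvd.dvd.mul_right h2k _) _
        have hfin : (f + e) ^ n - X = (f ^ n - X) * (h * r ^ (k + 1)) + e ^ 2 * a := by
          rw [ha, ← h1]
          ring
        rw [hfin]
        exact dvd_add (Dvd.dvd.mul_left (dvd_mul_left _ _) _) hd2
  obtain ⟨f, _, hdvd⟩ := key (max p.natDegree 1) (le_max_right _ _)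
  refine ⟨f, dvd_trans ?_ hdvd⟩
  -- p ∣ r ^ K
  set K := max p.natDegree 1 with hK
  set lc := p.leadingCoeff with hlc
  have hsplit : p = C lc * (p.roots.map fun a => X - C a).prod :=
    (Polynomial.C_leadingCoeff_mul_prod_multiset_X_sub_C
      (Polynomial.splits_iff_card_roots.1 (IsAlgClosed.splits p))).symm
  set q : ℂ[X] := (p.roots.map fun a => X - C a).prod with hq
  have hle : p.roots ≤ K • R.val := by
    rw [Multiset.le_iff_count]
    intro a
    rw [Multiset.count_nsmul]
    by_cases hmem : a ∈ p.roots
    · have h1 : Multiset.count a R.val = 1 := by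
        rw [hR]
        rw [Multiset.toFinset_val, Multiset.count_dedup, if_pos hmem]
      rw [h1, mul_one]
      calc Multiset.count a p.roots ≤ Multiset.card p.roots := Multiset.count_le_card _ _
        _ ≤ p.natDegree := Polynomial.card_roots' p
        _ ≤ K := le_max_left _ _
    · rw [Multiset.count_eq_zero_of_notMem hmem]
      exact Nat.zero_le _
  have hprod : q ∣ r ^ K := by
    have h2 := Multiset.prod_dvd_prod_of_le (Multiset.map_le_map (f := fun a => X - C a) hle)
    rw [Multiset.map_nsmul, Multiset.prod_nsmul] at h2
    have h3 : (R.val.map fun a => X - C a).prod = r := rfl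
    rwa [h3] at h2
  have hu : C lc⁻¹ * C lc = 1 := by
    rw [← C_mul, inv_mul_cancel₀ (Polynomial.leadingCoeff_ne_zero.2 hp), C_1]
  have hpd : p ∣ q := by
    refine ⟨C lc⁻¹, ?_⟩
    rw [hsplit]
    linear_combination (-q) * hu
  exact hpd.trans hprod


section TensorOps

variable {n d : ℕ}

lemma appAt_one (k : Fin n) (ψ : (Fin n → Fin d) → ℂ) : appAt k 1 ψ = ψ := by
  funext x
  unfold appAt
  rw [Finset.sum_eq_single (x k)]
  · simp [Matrix.one_apply]
  · intro j _ hj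
    rw [Matrix.one_apply_ne (Ne.symm hj), zero_mul]
  · simp

lemma appAt_mul (k : Fin n) (B C : Matrix (Fin d) (Fin d) ℂ) (ψ : (Fin n → Fin d) → ℂ) :
    appAt k (B * C) ψ = appAt k B (appAt k C ψ) := by
  funext x
  unfold appAt
  simp only [Function.update_self, Function.update_idem, Matrix.mul_apply,
    Finset.sum_mul, Finset.mul_sum]
  rw [Finset.sum_comm]
  exact Finset.sum_congr rfl fun i _ => Finset.sum_congr rfl fun j _ => mul_assoc _ _ _

lemma appAt_comm {k l : Fin n} (hkl : k ≠ l) (B C : Matrix (Fin d) (Fin d) ℂ)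
    (ψ : (Fin n → Fin d) → ℂ) :
    appAt k B (appAt l C ψ) = appAt l C (appAt k B ψ) := by
  funext x
  unfold appAt
  simp only [Finset.mul_sum]
  rw [Finset.sum_comm]
  refine Finset.sum_congr rfl fun i _ => Finset.sum_congr rfl fun j _ => ?_
  rw [Function.update_of_ne hkl.symm, Function.update_of_ne hkl,
    Function.update_comm hkl]
  ring

lemma appAt_add (k : Fin n) (B C : Matrix (Fin d) (Fin d) ℂ) (ψ : (Fin n → Fin d) → ℂ) :
    appAt k (B + C) ψ = appAt k B ψ + appAt k C ψ := by
  funext x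
  simp [appAt, Matrix.add_apply, add_mul, Finset.sum_add_distrib]

lemma appAt_smul (k : Fin n) (c : ℂ) (B : Matrix (Fin d) (Fin d) ℂ)
    (ψ : (Fin n → Fin d) → ℂ) :
    appAt k (c • B) ψ = c • appAt k B ψ := by
  funext x
  simp [appAt, Matrix.smul_apply, smul_eq_mul, Finset.mul_sum, mul_assoc]

lemma appAt_pow_eq {k0 : Fin n} (Xm : Matrix (Fin d) (Fin d) ℂ) (ψ : (Fin n → Fin d) → ℂ)
    (H : ∀ k, appAt k Xm ψ = appAt k0 Xm ψ) :
    ∀ m : ℕ, ∀ k, appAt k (Xm ^ m) ψ = appAt k0 (Xm ^ m) ψ := by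
  intro m
  induction m with
  | zero => intro k; rw [pow_zero, appAt_one, appAt_one]
  | succ m ih =>
    intro k
    by_cases hk : k = k0
    · rw [hk]
    · calc appAt k (Xm ^ (m + 1)) ψ
          = appAt k (Xm ^ m) (appAt k Xm ψ) := by rw [pow_succ, appAt_mul]
        _ = appAt k (Xm ^ m) (appAt k0 Xm ψ) := by rw [H k]
        _ = appAt k0 Xm (appAt k (Xm ^ m) ψ) := appAt_comm hk _ _ _
        _ = appAt k0 Xm (appAt k0 (Xm ^ m) ψ) := by rw [ih k]
        _ = appAt k0 (Xm * Xm ^ m) ψ := (appAt_mul _ _ _ _).symm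
        _ = appAt k0 (Xm ^ (m + 1)) ψ := by rw [← pow_succ']

lemma appAt_aeval_eq {k0 : Fin n} (Xm : Matrix (Fin d) (Fin d) ℂ) (ψ : (Fin n → Fin d) → ℂ)
    (H : ∀ k, appAt k Xm ψ = appAt k0 Xm ψ) (f : Polynomial ℂ) :
    ∀ k, appAt k (Polynomial.aeval Xm f) ψ = appAt k0 (Polynomial.aeval Xm f) ψ := by
  induction f using Polynomial.induction_on' with
  | add p q hp hq =>
    intro k
    rw [map_add, appAt_add, appAt_add, hp k, hq k]
  | monomial m c =>
    intro k
    rw [Polynomial.aeval_monomial, Algebra.algebraMap_eq_smul_one, smul_mul_assoc, one_mul,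
      appAt_smul, appAt_smul, appAt_pow_eq Xm ψ H m k]

lemma appAt_collapse {k0 : Fin n} (S : Matrix (Fin d) (Fin d) ℂ) (ψ : (Fin n → Fin d) → ℂ)
    (HS : ∀ k, appAt k S ψ = appAt k0 S ψ) (k : Fin n) (m : ℕ) :
    appAt k S (appAt k0 (S ^ m) ψ) = appAt k0 (S ^ (m + 1)) ψ := by
  by_cases hk : k = k0
  · rw [hk, ← appAt_mul, ← pow_succ']
  · rw [appAt_comm hk, HS k, ← appAt_mul, ← pow_succ]

lemma appAll_one (ψ : (Fin n → Fin d) → ℂ) :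
    appAll (fun _ => (1 : Matrix (Fin d) (Fin d) ℂ)) ψ = ψ := by
  funext x
  unfold appAll
  rw [Finset.sum_eq_single x]
  · simp [Matrix.one_apply]
  · intro y _ hyx
    have : ∃ k, x k ≠ y k := by
      by_contra hcon
      push_neg at hcon
      exact hyx (funext fun k => (hcon k).symm)
    obtain ⟨k, hk⟩ := this
    have h0 : (fun _ : Fin n => (1 : Matrix (Fin d) (Fin d) ℂ)) k (x k) (y k) = 0 :=
      Matrix.one_apply_ne hk
    rw [Finset.prod_eq_zero (Finset.mem_univ k) h0, zero_mul]
  · simp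

lemma appAll_peel (A : Fin n → Matrix (Fin d) (Fin d) ℂ) (s : Finset (Fin n)) (a : Fin n)
    (ha : a ∉ s) (ψ : (Fin n → Fin d) → ℂ) :
    appAll (fun k => if k ∈ insert a s then A k else 1) ψ
      = appAt a (A a) (appAll (fun k => if k ∈ s then A k else 1) ψ) := by
  funext x
  unfold appAll appAt
  simp only [Finset.mul_sum]
  rw [Finset.sum_comm]
  refine Finset.sum_congr rfl fun y _ => ?_
  have hprod : ∀ j, (∏ k, (if k ∈ s then A k else 1) (Function.update x a j k) (y k))
      = (if j = y a then 1 else 0) * ∏ k ∈ Finset.univ.erase a,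
          (if k ∈ s then A k else 1) (x k) (y k) := by
    intro j
    rw [← Finset.mul_prod_erase Finset.univ _ (Finset.mem_univ a)]
    congr 1
    · simp [ha, Matrix.one_apply]
    · exact Finset.prod_congr rfl fun k hk => by
        rw [Function.update_of_ne (Finset.mem_erase.1 hk).1]
  simp only [hprod]
  rw [Finset.sum_eq_single (y a)]
  · rw [if_pos rfl, one_mul, ← Finset.mul_prod_erase Finset.univ
      (fun k => (if k ∈ insert a s then A k else 1) (x k) (y k)) (Finset.mem_univ a)]
    rw [if_pos (Finset.mem_insert_self a s)]
    have : ∀ k ∈ Finset.univ.erase a,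
        (if k ∈ insert a s then A k else 1) (x k) (y k)
          = (if k ∈ s then A k else 1) (x k) (y k) := by
      intro k hk
      have hka : k ≠ a := (Finset.mem_erase.1 hk).1
      by_cases hks : k ∈ s
      · rw [if_pos (Finset.mem_insert_of_mem hks), if_pos hks]
      · have hni : k ∉ insert a s := by
          intro hmem
          rcases Finset.mem_insert.1 hmem with h | h
          · exact hka h
          · exact hks h
        rw [if_neg hni, if_neg hks]
    rw [Finset.prod_congr rfl this]
    ring
  · intro j _ hj
    rw [if_neg hj]
    ring
  · simp

lemma appAll_masked (S : Matrix (Fin d) (Fin d) ℂ) (ψ : (Fin n → Fin d) → ℂ) (k0 : Fin n)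
    (HS : ∀ k, appAt k S ψ = appAt k0 S ψ) (s : Finset (Fin n)) :
    appAll (fun k => if k ∈ s then S else 1) ψ = appAt k0 (S ^ s.card) ψ := by
  induction s using Finset.induction_on with
  | empty =>
    simp only [Finset.notMem_empty, if_false, Finset.card_empty, pow_zero]
    rw [appAll_one, appAt_one]
  | @insert a s ha ih =>
    rw [appAll_peel (fun _ => S) s a ha, ih, appAt_collapse S ψ HS,
      Finset.card_insert_of_notMem ha]

lemma appAt_perm {k : Fin n} {ψ : (Fin n → Fin d) → ℂ} (hψ : PSym ψ)
    (σ : Equiv.Perm (Fin n)) (B : Matrix (Fin d) (Fin d) ℂ) (x : Fin n → Fin d) :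
    appAt k B ψ (x ∘ σ) = appAt (σ k) B ψ x := by
  unfold appAt
  refine Finset.sum_congr rfl fun j _ => ?_
  have hup : Function.update (x ∘ σ) k j = (Function.update x (σ k) j) ∘ σ := by
    funext i
    by_cases h : i = k
    · subst h; simp
    · rw [Function.comp_apply, Function.update_of_ne h,
        Function.update_of_ne (fun hc => h (σ.injective hc)), Function.comp_apply]
  rw [hup, hψ σ]
  rfl

end TensorOps

lemma main_aux {n d : ℕ} (hn1 : 1 ≤ n) (k0 : Fin n) (ψ : (Fin n → Fin d) → ℂ)
    (hψ : PSym ψ) (X : Matrix (Fin d) (Fin d) ℂ) (hX : IsUnit X.det)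
    (hsym : PSym (appAt k0 X ψ)) :
    ∃ S : Matrix (Fin d) (Fin d) ℂ,
      S ^ n = X ∧ PSym (appAt k0 S ψ) ∧
        appAll (fun _ => S) ψ = appAt k0 X ψ := by
  have H : ∀ k, appAt k X ψ = appAt k0 X ψ := by
    intro k
    funext x
    have h1 := appAt_perm (k := k0) hψ (Equiv.swap k0 k) X x
    rw [Equiv.swap_apply_left] at h1
    rw [← h1]
    exact hsym (Equiv.swap k0 k) x
  have hp0 : X.charpoly.eval 0 ≠ 0 := by
    rw [← Polynomial.coeff_zero_eq_eval_zero]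
    intro h
    have hd := Matrix.det_eq_sign_charpoly_coeff X
    rw [h, mul_zero] at hd
    exact hX.ne_zero hd
  obtain ⟨f, hf⟩ := exists_root_poly X.charpoly hp0 n hn1
  obtain ⟨g, hg⟩ := hf
  set S : Matrix (Fin d) (Fin d) ℂ := Polynomial.aeval X f with hS
  have hSn : S ^ n = X := by
    have h2 := congrArg (Polynomial.aeval X) hg
    simp only [map_sub, map_pow, _root_.map_mul, Polynomial.aeval_X,
      Matrix.aeval_self_charpoly, zero_mul] at h2
    exact sub_eq_zero.1 h2
  have HS : ∀ k, appAt k S ψ = appAt k0 S ψ := appAt_aeval_eq X ψ H f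
  refine ⟨S, hSn, ?_, ?_⟩
  · intro σ x
    rw [appAt_perm hψ σ S x, HS (σ k0)]
  · have hmask := appAll_masked S ψ k0 HS Finset.univ
    simp only [Finset.mem_univ, if_true] at hmask
    rw [hmask, Finset.card_univ, Fintype.card_fin, hSn]

theorem stmt_7 {n d : ℕ} (hn : 3 ≤ n) (ψ : (Fin n → Fin d) → ℂ) (hψ : PSym ψ)
    (X : Matrix (Fin d) (Fin d) ℂ) (hX : IsUnit X.det)
    (hsym : PSym (appAt ⟨0, by omega⟩ X ψ)) :
    ∃ S : Matrix (Fin d) (Fin d) ℂ,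
      S ^ n = X ∧ PSym (appAt ⟨0, by omega⟩ S ψ) ∧
        appAll (fun _ => S) ψ = appAt ⟨0, by omega⟩ X ψ := by
  exact main_aux (by omega) ⟨0, by omega⟩ ψ hψ X hX hsym
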